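/- Suppose in addition that L contains a subfield of codimension 1 over K²: there exist a subfield K₁ of K with K² ⊆ K₁ ⊆ L and an element u ∈ L such that L = K₁ + K²·u. Then the subgroup T of Kˣ generated by L \ {0} equals the set of nonzero elements of the subfield of K generated by L, and every element of T is a product of two elements of L \ {0}. -/

import Mathlib

noncomputable section

variable {K : Type*} [Field K]

/-- The subgroup of `Kˣ` generated by the nonzero elements of `L`. -/
def Tgen (L : AddSubgroup K) : Subgroup Kˣ := Subgroup.closure {u : Kˣ | (u : K) ∈ L}

/-- If `L` contains a subfield `K₁` of codimension `1` over `K²` (i.e. `L = K₁ + K²·u`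
for some `u ∈ L`), then the subgroup `T` of `Kˣ` generated by `L \ {0}` is exactly the
set of nonzero elements of the subfield of `K` generated by `L`, and every element of
`T` is a product of two nonzero elements of `L`. -/
theorem Tgen_eq_units_of_field_of_codim_one
    [CharP K 2] (himperf : ¬ Function.Surjective fun x : K => x ^ 2)
    (L : AddSubgroup K) (hsq : ∀ x : K, x ^ 2 ∈ L)
    (hvs : ∀ s t : K, t ∈ L → s ^ 2 * t ∈ L)
    (K₁ : Subfield K) (hK₁sq : ∀ x : K, x ^ 2 ∈ K₁)
    (hK₁L : (K₁ : Set K) ⊆ L) (u : K) (hu : u ∈ L)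
    (hLeq : ∀ y : K, y ∈ L ↔ ∃ c ∈ K₁, ∃ s : K, y = c + s ^ 2 * u) :
    (∀ v : Kˣ, v ∈ Tgen L ↔ (v : K) ∈ Subfield.closure (L : Set K)) ∧
      ∀ v : Kˣ, v ∈ Tgen L → ∃ x ∈ L, ∃ y ∈ L, x ≠ 0 ∧ y ≠ 0 ∧ (v : K) = x * y := by
  have honeL : (1 : K) ∈ L := hK₁L K₁.one_mem
  -- L \ {0} is closed under inverses
  have hinvL : ∀ x : K, x ∈ L → x ≠ 0 → x⁻¹ ∈ L := by
    intro x hx hx0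
    have h := hvs x⁻¹ x hx
    rwa [show (x⁻¹ : K) ^ 2 * x = x⁻¹ by field_simp] at h
  have hu2 : u ^ 2 ∈ K₁ := hK₁sq u
  -- key multiplication lemma : a product of two nonzero elements of L is
  -- (nonzero element of K₁) * (nonzero element of L)
  have hmul : ∀ x ∈ L, ∀ y ∈ L, x ≠ 0 → y ≠ 0 →
      ∃ a ∈ K₁, ∃ w ∈ L, a ≠ 0 ∧ w ≠ 0 ∧ x * y = a * w := by
    intro x hx y hy hx0 hy0
    obtain ⟨c, hc, s, rfl⟩ := (hLeq x).1 hx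
    obtain ⟨c', hc', s', rfl⟩ := (hLeq y).1 hy
    have hdK : c * s' ^ 2 + c' * s ^ 2 ∈ K₁ :=
      K₁.add_mem (K₁.mul_mem hc (hK₁sq s')) (K₁.mul_mem hc' (hK₁sq s))
    have hnK : c * c' + s ^ 2 * s' ^ 2 * u ^ 2 ∈ K₁ :=
      K₁.add_mem (K₁.mul_mem hc hc')
        (K₁.mul_mem (K₁.mul_mem (hK₁sq s) (hK₁sq s')) hu2)
    have hexp : (c + s ^ 2 * u) * (c' + s' ^ 2 * u)
        = (c * c' + s ^ 2 * s' ^ 2 * u ^ 2) + (c * s' ^ 2 + c' * s ^ 2) * u := by ring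
    by_cases hd : c * s' ^ 2 + c' * s ^ 2 = 0
    · refine ⟨(c + s ^ 2 * u) * (c' + s' ^ 2 * u), ?_, 1, honeL,
        mul_ne_zero hx0 hy0, one_ne_zero, by ring⟩
      rw [hexp, hd]
      simpa using hnK
    · set d := c * s' ^ 2 + c' * s ^ 2 with hd_def
      refine ⟨d, hdK, (c * c' + s ^ 2 * s' ^ 2 * u ^ 2) / d + u, ?_, hd, ?_, ?_⟩
      · exact L.add_mem (hK₁L (K₁.div_mem hnK hdK)) hu
      · intro hw0
        apply mul_ne_zero hx0 hy0
        rw [hexp]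
        have : (c * c' + s ^ 2 * s' ^ 2 * u ^ 2) = -(d * u) := by
          have := hw0
          field_simp at this
          linear_combination this
        rw [this]; ring
      · rw [hexp]; field_simp
    -- the candidate subgroup
  let P : Kˣ → Prop := fun v => ∃ a ∈ K₁, ∃ w ∈ L, a ≠ 0 ∧ w ≠ 0 ∧ (v : K) = a * w
  have Pone : P 1 := ⟨1, K₁.one_mem, 1, honeL, one_ne_zero, one_ne_zero, by simp⟩
  have Pmul : ∀ v v' : Kˣ, P v → P v' → P (v * v') := by
    rintro v v' ⟨a, ha, w, hw, ha0, hw0, hv⟩ ⟨a', ha', w', hw', ha0', hw0', hv'⟩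
    obtain ⟨b, hb, z, hz, hb0, hz0, hwz⟩ := hmul w hw w' hw' hw0 hw0'
    refine ⟨a * a' * b, K₁.mul_mem (K₁.mul_mem ha ha') hb, z, hz,
      mul_ne_zero (mul_ne_zero ha0 ha0') hb0, hz0, ?_⟩
    rw [Units.val_mul, hv, hv']
    rw [show a * w * (a' * w') = a * a' * (w * w') by ring, hwz]; ring
  have Pinv : ∀ v : Kˣ, P v → P v⁻¹ := by
    rintro v ⟨a, ha, w, hw, ha0, hw0, hv⟩
    refine ⟨a⁻¹, K₁.inv_mem ha, w⁻¹, hinvL w hw hw0, inv_ne_zero ha0,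
      inv_ne_zero hw0, ?_⟩
    rw [Units.val_inv_eq_inv_val, hv, mul_inv]
  let S : Subgroup Kˣ :=
    { carrier := setOf P
      one_mem' := Pone
      mul_mem' := fun {a b} ha hb => Pmul a b ha hb
      inv_mem' := fun {a} ha => Pinv a ha }
  have hmemS : ∀ v : Kˣ, v ∈ S ↔ P v := fun v => Iff.rfl
  -- Tgen L = S
  have hTS : Tgen L = S := by
    apply le_antisymm
    · apply (Subgroup.closure_le S).2
      intro v hv
      exact ⟨1, K₁.one_mem, (v : K), hv, one_ne_zero, v.ne_zero, (one_mul _).symm⟩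
    · intro v hv
      obtain ⟨a, ha, w, hw, ha0, hw0, hv⟩ := (hmemS v).1 hv
      have : v = Units.mk0 a ha0 * Units.mk0 w hw0 := by
        ext; simpa using hv
      rw [this]
      exact mul_mem (Subgroup.subset_closure (by simpa using hK₁L ha))
        (Subgroup.subset_closure (by simpa using hw))
  -- elements of the field closure are of the form a + b * u with a b ∈ K₁
  have hQ : ∀ x : K, x ∈ Subfield.closure (L : Set K) →
      ∃ a ∈ K₁, ∃ b ∈ K₁, x = a + b * u := by
    intro x hx
    induction hx using Subfield.closure_induction with
    | mem y hy =>
      obtain ⟨c, hc, s, rfl⟩ := (hLeq y).1 hy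
      exact ⟨c, hc, s ^ 2, hK₁sq s, rfl⟩
    | one => exact ⟨1, K₁.one_mem, 0, K₁.zero_mem, by simp⟩
    | add y z _ _ hy hz =>
      obtain ⟨a, ha, b, hb, rfl⟩ := hy
      obtain ⟨a', ha', b', hb', rfl⟩ := hz
      exact ⟨a + a', K₁.add_mem ha ha', b + b', K₁.add_mem hb hb', by ring⟩
    | neg y _ hy =>
      obtain ⟨a, ha, b, hb, rfl⟩ := hy
      exact ⟨-a, K₁.neg_mem ha, -b, K₁.neg_mem hb, by ring⟩
    | mul y z _ _ hy hz =>
      obtain ⟨a, ha, b, hb, rfl⟩ := hy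
      obtain ⟨a', ha', b', hb', rfl⟩ := hz
      exact ⟨a * a' + b * b' * u ^ 2,
        K₁.add_mem (K₁.mul_mem ha ha') (K₁.mul_mem (K₁.mul_mem hb hb') hu2),
        a * b' + a' * b, K₁.add_mem (K₁.mul_mem ha hb') (K₁.mul_mem ha' hb),
        by ring⟩
    | inv y _ hy =>
      obtain ⟨a, ha, b, hb, rfl⟩ := hy
      by_cases hy0 : a + b * u = 0
      · exact ⟨a, ha, b, hb, by simp [hy0]⟩
      by_cases hb0 : b = 0
      · exact ⟨a⁻¹, K₁.inv_mem ha, 0, K₁.zero_mem, by rw [hb0]; simp⟩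
      · have hwL : a / b + u ∈ L := L.add_mem (hK₁L (K₁.div_mem ha hb)) hu
        have hw0 : a / b + u ≠ 0 := by
          intro h
          apply hy0
          field_simp at h
          linear_combination h
        have hinv : (a / b + u)⁻¹ ∈ L := hinvL _ hwL hw0
        obtain ⟨c, hc, s, hcs⟩ := (hLeq _).1 hinv
        refine ⟨b⁻¹ * c, K₁.mul_mem (K₁.inv_mem hb) hc,
          b⁻¹ * s ^ 2, K₁.mul_mem (K₁.inv_mem hb) (hK₁sq s), ?_⟩
        have : (a + b * u)⁻¹ = b⁻¹ * (a / b + u)⁻¹ := by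
          rw [← mul_inv]
          congr 1
          field_simp
        rw [this, hcs]; ring
  constructor
  · intro v
    constructor
    · intro hv
      rw [hTS] at hv
      obtain ⟨a, ha, w, hw, ha0, hw0, hv⟩ := (hmemS v).1 hv
      rw [hv]
      exact mul_mem (Subfield.subset_closure (hK₁L ha)) (Subfield.subset_closure hw)
    · intro hv
      obtain ⟨a, ha, b, hb, hab⟩ := hQ _ hv
      rw [hTS, hmemS]
      by_cases hb0 : b = 0
      · refine ⟨(v : K), ?_, 1, honeL, v.ne_zero, one_ne_zero, by simp⟩
        rw [hab, hb0]; simpa using ha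
      · refine ⟨b, hb, a / b + u, L.add_mem (hK₁L (K₁.div_mem ha hb)) hu, hb0, ?_, ?_⟩
        · intro h
          apply v.ne_zero
          rw [hab]
          field_simp at h
          linear_combination h
        · rw [hab]; field_simp
  · intro v hv
    rw [hTS] at hv
    obtain ⟨a, ha, w, hw, ha0, hw0, hv⟩ := (hmemS v).1 hv
    exact ⟨a, hK₁L ha, w, hw, ha0, hw0, hv⟩

end
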